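/- Let B₁ be a τ₁-structure and B₂ a τ₂-structure with disjoint relational signatures. Define the (τ₁ ∪ τ₂)-structure M with domain B₁ × B₂ where, for R ∈ τ₁ of arity k, ((a₁,b₁),…,(a_k,b_k)) ∈ R^M iff (for all i,j: aᵢ = a_j ⟺ bᵢ = b_j) and (a₁,…,a_k) ∈ R^{B₁}, and symmetrically for R ∈ τ₂ using the second coordinates. If h₁ : D(φ₁) → B₁ and h₂ : D(φ₂) → B₂ are homomorphisms (for conjunctions φ₁ of atomic τ₁-formulas and φ₂ of atomic τ₂-formulas on the same variable set) that identify exactly the same pairs of variables, then x ↦ (h₁(x), h₂(x)) is a homomorphism from D(φ₁ ∧ φ₂) to M. -/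

import Mathlib

/-- A finite-arity relational signature: a type of relation symbols with arities. -/
structure Signature where
  symb : Type
  arity : symb → ℕ

/-- A relational structure over a signature. -/
structure Struct (σ : Signature) where
  dom : Type
  rel : ∀ r : σ.symb, Set (Fin (σ.arity r) → dom)

/-- Atomic formulas over variables `V`: relational atoms, equality, and falsum. -/
inductive Atom (σ : Signature) (V : Type) where
  | rel (r : σ.symb) (v : Fin (σ.arity r) → V)
  | eq (x y : V)
  | bot

/-- Satisfaction of an atomic formula under an assignment. -/
def Atom.holds {σ : Signature} {V : Type} (A : Struct σ) (s : V → A.dom) :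
    Atom σ V → Prop
  | .rel r v => (fun i => s (v i)) ∈ A.rel r
  | .eq x y => s x = s y
  | .bot => False

/-- An assignment satisfies a conjunction (list) of atomic formulas. -/
def satisfies {σ : Signature} {V : Type} (A : Struct σ) (s : V → A.dom)
    (φ : List (Atom σ V)) : Prop :=
  ∀ a ∈ φ, a.holds A s

/-- A conjunction of atomic formulas is satisfiable in a structure. -/
def satisfiable {σ : Signature} {V : Type} (A : Struct σ) (φ : List (Atom σ V)) : Prop :=
  ∃ s : V → A.dom, satisfies A s φ

/-- The atom is a relational atom (not an equality and not `⊥`). -/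
def Atom.isRel {σ : Signature} {V : Type} : Atom σ V → Prop
  | .rel _ _ => True
  | _ => False

/-- The variables occurring in an atom. -/
def Atom.vars {σ : Signature} {V : Type} : Atom σ V → Set V
  | .rel _ v => Set.range v
  | .eq x y => {x, y}
  | .bot => ∅

/-- The canonical database of a conjunction of atomic formulas: the structure on the
variables in which `R` holds on exactly the tuples `t` with `R(t)` a conjunct. -/
def canonicalDB {σ : Signature} {V : Type} (φ : List (Atom σ V)) : Struct σ :=
  ⟨V, fun r => {v | Atom.rel r v ∈ φ}⟩

/-- Homomorphisms of relational structures. -/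
def IsHom {σ : Signature} (A B : Struct σ) (h : A.dom → B.dom) : Prop :=
  ∀ (r : σ.symb) (v : Fin (σ.arity r) → A.dom), v ∈ A.rel r → (fun i => h (v i)) ∈ B.rel r

/-- The union of two disjoint relational signatures. -/
def Signature.sum (σ₁ σ₂ : Signature) : Signature :=
  ⟨σ₁.symb ⊕ σ₂.symb, Sum.elim σ₁.arity σ₂.arity⟩

/-- View an atomic `τ₁`-formula as an atomic `(τ₁ ∪ τ₂)`-formula. -/
def Atom.mapL {σ₁ σ₂ : Signature} {V : Type} : Atom σ₁ V → Atom (σ₁.sum σ₂) V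
  | .rel r v => .rel (Sum.inl r) v
  | .eq x y => .eq x y
  | .bot => .bot

/-- View an atomic `τ₂`-formula as an atomic `(τ₁ ∪ τ₂)`-formula. -/
def Atom.mapR {σ₁ σ₂ : Signature} {V : Type} : Atom σ₂ V → Atom (σ₁.sum σ₂) V
  | .rel r v => .rel (Sum.inr r) v
  | .eq x y => .eq x y
  | .bot => .bot

/-- The product-style `(τ₁ ∪ τ₂)`-structure on `B₁ × B₂`: a relation of `τ₁` holds on a
tuple iff any two entries agree in the first coordinate exactly when they agree in the
second coordinate, and the first coordinates form a tuple of the relation in `B₁`;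
symmetrically for `τ₂`. -/
def prodStruct {σ₁ σ₂ : Signature} (B₁ : Struct σ₁) (B₂ : Struct σ₂) :
    Struct (σ₁.sum σ₂) :=
  ⟨B₁.dom × B₂.dom, fun r =>
    match r with
    | Sum.inl r => {v | (∀ i j, (v i).1 = (v j).1 ↔ (v i).2 = (v j).2) ∧
        (fun i => (v i).1) ∈ B₁.rel r}
    | Sum.inr r => {v | (∀ i j, (v i).1 = (v j).1 ↔ (v i).2 = (v j).2) ∧
        (fun i => (v i).2) ∈ B₂.rel r}⟩

/-- if `h₁ : D(φ₁) → B₁` and `h₂ : D(φ₂) → B₂` are homomorphisms that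
identify exactly the same pairs of variables, then `x ↦ (h₁ x, h₂ x)` is a homomorphism
from `D(φ₁ ∧ φ₂)` to the product-style structure on `B₁ × B₂`. -/
theorem stmt_11 {σ₁ σ₂ : Signature} {V : Type} (B₁ : Struct σ₁) (B₂ : Struct σ₂)
    (φ₁ : List (Atom σ₁ V)) (φ₂ : List (Atom σ₂ V))
    (hrel₁ : ∀ a ∈ φ₁, a.isRel) (hrel₂ : ∀ a ∈ φ₂, a.isRel)
    (h₁ : V → B₁.dom) (h₂ : V → B₂.dom)
    (hhom₁ : IsHom (canonicalDB φ₁) B₁ h₁) (hhom₂ : IsHom (canonicalDB φ₂) B₂ h₂)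
    (hsame : ∀ x y : V, h₁ x = h₁ y ↔ h₂ x = h₂ y) :
    IsHom (canonicalDB (φ₁.map Atom.mapL ++ φ₂.map Atom.mapR)) (prodStruct B₁ B₂)
      (fun x => (h₁ x, h₂ x)) := by
  intro r v hv
  simp only [canonicalDB, Set.mem_setOf_eq, List.mem_append, List.mem_map] at hv
  cases r with
  | inl r =>
    have hmem : Atom.rel r v ∈ φ₁ := by
      rcases hv with ⟨a, ha, heq⟩ | ⟨a, ha, heq⟩
      · cases a <;> simp [Atom.mapL] at heq
        obtain ⟨h1, h2⟩ := Atom.rel.inj heq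
        obtain rfl := Sum.inl.inj h1; rw [eq_of_heq h2] at ha; exact ha
      · cases a <;> simp [Atom.mapR] at heq
        exact absurd (Atom.rel.inj heq).1 Sum.inr_ne_inl
    exact ⟨fun i j => hsame (v i) (v j), hhom₁ r v hmem⟩
  | inr r =>
    have hmem : Atom.rel r v ∈ φ₂ := by
      rcases hv with ⟨a, ha, heq⟩ | ⟨a, ha, heq⟩
      · cases a <;> simp [Atom.mapL] at heq
        exact absurd (Atom.rel.inj heq).1 Sum.inl_ne_inr
      · cases a <;> simp [Atom.mapR] at heq
        obtain ⟨h1, h2⟩ := Atom.rel.inj heq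
        obtain rfl := Sum.inr.inj h1; rw [eq_of_heq h2] at ha; exact ha
    exact ⟨fun i j => hsame (v i) (v j), hhom₂ r v hmem⟩
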